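/- For every n ≥ 1 and all partitions ν, ρ of n, the number of locally orientable partitioned hypermaps of type (ν,ρ) satisfies LP^n_{ν,ρ} = Σ_{λ,μ ⊢ n} R̄_{λ,ν} · R̄_{μ,ρ} · L^n_{λ,μ}, where the sum is over all pairs of partitions λ, μ of n (only refinements λ of ν and μ of ρ contribute). -/

import Mathlib

open scoped BigOperators

/-- The ground set `{1,…,2n}` encoding `[n] ∪ [n̂]`: the non-hat number `i` is
encoded as `2i−1` (odd) and the hat number `î` as `2i` (even). -/
def groundSet (n : ℕ) : Finset ℕ := Finset.Icc 1 (2 * n)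

/-- The pairing `f₁ = (1 n̂)(2 1̂)(3 2̂)⋯(n n−1̂)`: swaps `2j` and `2j+1` for
`1 ≤ j ≤ n−1`, and swaps `2n` and `1`. -/
def f1 (n : ℕ) : ℕ → ℕ := fun x =>
  if x = 2 * n then 1
  else if x = 1 then 2 * n
  else if x % 2 = 0 then x + 1 else x - 1

/-- The pairing `f₂ = (1 1̂)(2 2̂)⋯(n n̂)`: swaps `2i−1` and `2i`. -/
def f2 : ℕ → ℕ := fun x => if x % 2 = 0 then x - 1 else x + 1

/-- A pairing (fixed-point-free involution) of `{1,…,2n}`, encoded as a function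
`ℕ → ℕ` that is the identity outside the ground set. -/
def IsPairing (n : ℕ) (f : ℕ → ℕ) : Prop :=
  (∀ x ∈ groundSet n, f x ∈ groundSet n ∧ f (f x) = x ∧ f x ≠ x) ∧
  ∀ x ∉ groundSet n, f x = x

/-- A set partition of `{1,…,2n}` with blocks given as a finite set of finite sets. -/
def IsSetPartition (n : ℕ) (π : Finset (Finset ℕ)) : Prop :=
  (∀ B ∈ π, B.Nonempty) ∧ (∀ B ∈ π, B ⊆ groundSet n) ∧
  ∀ x ∈ groundSet n, ∃! B, B ∈ π ∧ x ∈ B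

/-- A set `B` is stable under (invariant under) a function `f`. -/
def StableUnder (f : ℕ → ℕ) (B : Finset ℕ) : Prop := ∀ x ∈ B, f x ∈ B

/-- A locally orientable partitioned hypermap: a pairing `f3` together with set
partitions `π1`, `π2` of `{1,…,2n}` such that every block of `π1` is invariant
under `f1` and `f3` and every block of `π2` is invariant under `f2` and `f3`. -/
def IsLOPH (n : ℕ) (f3 : ℕ → ℕ) (π1 π2 : Finset (Finset ℕ)) : Prop :=
  IsPairing n f3 ∧ IsSetPartition n π1 ∧ IsSetPartition n π2 ∧
  (∀ B ∈ π1, StableUnder (f1 n) B ∧ StableUnder f3 B) ∧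
  (∀ B ∈ π2, StableUnder f2 B ∧ StableUnder f3 B)

/-- The maximum non-hat (odd) element of `B` (as a `sup`, which is the maximum
when an odd element exists). -/
def maxOdd (B : Finset ℕ) : ℕ := (B.filter fun x => x % 2 = 1).sup id

/-- The maximum hat (even) element of `B`. -/
def maxEven (B : Finset ℕ) : ℕ := (B.filter fun x => x % 2 = 0).sup id

/-- The number of pairs `{u, f3 u} ⊆ B` with both `u` and `f3 u` non-hat. -/
def nnPairs (f3 : ℕ → ℕ) (B : Finset ℕ) : ℕ :=
  ((B.filter fun u => u % 2 = 1 ∧ f3 u % 2 = 1 ∧ f3 u ∈ B).image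
    fun u => ({u, f3 u} : Finset ℕ)).card

/-- The number of pairs `{u, f3 u} ⊆ B` with both `u` and `f3 u` hat. -/
def hhPairs (f3 : ℕ → ℕ) (B : Finset ℕ) : ℕ :=
  ((B.filter fun u => u % 2 = 0 ∧ f3 u % 2 = 0 ∧ f3 u ∈ B).image
    fun u => ({u, f3 u} : Finset ℕ)).card

/-- For a block `B` of `π1`: the number of pairs `{t, f3 t} ⊆ B` where `t` is the
maximum hat element of some block of `π2` and `f3 t` is also hat. -/
def jCount1 (f3 : ℕ → ℕ) (π2 : Finset (Finset ℕ)) (B : Finset ℕ) : ℕ :=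
  ((B.filter fun t => t % 2 = 0 ∧ f3 t % 2 = 0 ∧ f3 t ∈ B ∧
      ∃ C ∈ π2, t ∈ C ∧ t = maxEven C).image
    fun t => ({t, f3 t} : Finset ℕ)).card

/-- For a block `B` of `π2`: the number of pairs `{t, f3 t} ⊆ B` where `t` is the
maximum non-hat element of some block of `π1` not containing `1` and `f3 t` is
also non-hat. -/
def jCount2 (f3 : ℕ → ℕ) (π1 : Finset (Finset ℕ)) (B : Finset ℕ) : ℕ :=
  ((B.filter fun t => t % 2 = 1 ∧ f3 t % 2 = 1 ∧ f3 t ∈ B ∧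
      ∃ C ∈ π1, 1 ∉ C ∧ t ∈ C ∧ t = maxOdd C).image
    fun t => ({t, f3 t} : Finset ℕ)).card

/-- Number of blocks of `π1` counted by `P` with parameters `(i,j,k)`. -/
def countP (f3 : ℕ → ℕ) (π1 π2 : Finset (Finset ℕ)) (i j k : ℕ) : ℕ :=
  (π1.filter fun B => (1 ∈ B ∨ f3 (maxOdd B) % 2 = 0) ∧ B.card = 2 * i ∧
    jCount1 f3 π2 B = j ∧ nnPairs f3 B = j + k).card

/-- Number of blocks of `π1` counted by `P'` with parameters `(i,j,k)`. -/
def countP' (f3 : ℕ → ℕ) (π1 π2 : Finset (Finset ℕ)) (i j k : ℕ) : ℕ :=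
  (π1.filter fun B => (1 ∉ B ∧ f3 (maxOdd B) % 2 = 1) ∧ B.card = 2 * i ∧
    jCount1 f3 π2 B = j ∧ nnPairs f3 B = j + k).card

/-- Number of blocks of `π2` counted by `Q` with parameters `(i,j,k)`. -/
def countQ (f3 : ℕ → ℕ) (π1 π2 : Finset (Finset ℕ)) (i j k : ℕ) : ℕ :=
  (π2.filter fun B => f3 (maxEven B) % 2 = 1 ∧ B.card = 2 * i ∧
    jCount2 f3 π1 B = j ∧ hhPairs f3 B = j + k).card

/-- Number of blocks of `π2` counted by `Q'` with parameters `(i,j,k)`. -/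
def countQ' (f3 : ℕ → ℕ) (π1 π2 : Finset (Finset ℕ)) (i j k : ℕ) : ℕ :=
  (π2.filter fun B => f3 (maxEven B) % 2 = 0 ∧ B.card = 2 * i ∧
    jCount2 f3 π1 B = j ∧ hhPairs f3 B = j + k).card

/-- `LP(A)`: the number of locally orientable partitioned hypermaps whose block
classification gives exactly the arrays `P, P', Q, Q'`. -/
noncomputable def LP (n : ℕ) (P P' Q Q' : ℕ × ℕ × ℕ → ℕ) : ℕ :=
  Set.ncard { m : (ℕ → ℕ) × Finset (Finset ℕ) × Finset (Finset ℕ) |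
    IsLOPH n m.1 m.2.1 m.2.2 ∧
    ∀ i j k : ℕ,
      countP m.1 m.2.1 m.2.2 i j k = P (i, j, k) ∧
      countP' m.1 m.2.1 m.2.2 i j k = P' (i, j, k) ∧
      countQ m.1 m.2.1 m.2.2 i j k = Q (i, j, k) ∧
      countQ' m.1 m.2.1 m.2.2 i j k = Q' (i, j, k) }

/-- The half-type of a set partition: the multiset of half-cardinalities of its blocks. -/
def halfType (π : Finset (Finset ℕ)) : Multiset ℕ := π.val.map fun B => B.card / 2

/-- `LP^n_{ν,ρ}`: the number of locally orientable partitioned hypermaps of type `(ν,ρ)`. -/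
noncomputable def LPtype (n : ℕ) (ν ρ : Multiset ℕ) : ℕ :=
  Set.ncard { m : (ℕ → ℕ) × Finset (Finset ℕ) × Finset (Finset ℕ) |
    IsLOPH n m.1 m.2.1 m.2.2 ∧ halfType m.2.1 = ν ∧ halfType m.2.2 = ρ }

/-- The forward orbit of `x` under `h` (the full orbit when `h` permutes a finite set). -/
def fwdOrbit (h : ℕ → ℕ) (x : ℕ) : Set ℕ := { y | ∃ m : ℕ, h^[m] x = y }

/-- `h` has cycle type `μ` on `{1,…,2n}` (fixed points counted as parts equal to `1`):
for every `k`, the number of orbits of `h` on the ground set with exactly `k`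
elements equals the multiplicity of `k` in `μ`. -/
def HasCycleTypeOn (n : ℕ) (h : ℕ → ℕ) (μ : Multiset ℕ) : Prop :=
  ∀ k : ℕ,
    ({ S : Set ℕ | (∃ x ∈ groundSet n, S = fwdOrbit h x) ∧ S.ncard = k }).ncard = μ.count k

/-- `L^n_{λ,μ}`: the number of pairings `f3` of `{1,…,2n}` such that `f3∘f1` has
cycle type `λλ` and `f3∘f2` has cycle type `μμ`. -/
noncomputable def Lcount (n : ℕ) (lam mu : Nat.Partition n) : ℕ :=
  Set.ncard { f3 : ℕ → ℕ | IsPairing n f3 ∧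
    HasCycleTypeOn n (f3 ∘ f1 n) (lam.parts + lam.parts) ∧
    HasCycleTypeOn n (f3 ∘ f2) (mu.parts + mu.parts) }

/-- `R̄_{λ,ν}`: the number of set partitions of `{1,…,ℓ(λ)}` whose multiset of
block sums `{Σ_{i∈B} λ_i}` equals the multiset of parts of `ν`. -/
noncomputable def Rbar {n : ℕ} (lam nu : Nat.Partition n) : ℕ :=
  Set.ncard { π : Finset (Finset ℕ) |
    (∀ B ∈ π, B.Nonempty) ∧
    (∀ B ∈ π, B ⊆ Finset.Icc 1 lam.parts.card) ∧
    (∀ x ∈ Finset.Icc 1 lam.parts.card, ∃! B, B ∈ π ∧ x ∈ B) ∧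
    π.val.map (fun B => B.sum fun i => lam.parts.toList.getD (i - 1) 0) = nu.parts }

namespace LPH

def GoodInvol (n : ℕ) (f : ℕ → ℕ) : Prop :=
  ∀ x ∈ groundSet n, f x ∈ groundSet n ∧ f (f x) = x ∧ f x ≠ x

theorem good_of_pairing {n f} (h : IsPairing n f) : GoodInvol n f := h.1

theorem mem_ground {n x : ℕ} : x ∈ groundSet n ↔ 1 ≤ x ∧ x ≤ 2 * n := Finset.mem_Icc

theorem good_f1 {n : ℕ} (hn : 1 ≤ n) : GoodInvol n (f1 n) := by
  intro x hx
  rw [mem_ground] at hx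
  obtain ⟨hx1, hx2⟩ := hx
  have h2n : 2 ≤ 2 * n := by omega
  by_cases hA : x = 2 * n
  · subst hA
    have : f1 n (2*n) = 1 := by simp [f1]
    rw [this]
    have : f1 n 1 = 2*n := by simp [f1]
    rw [this]
    refine ⟨by rw [mem_ground]; omega, rfl, by omega⟩
  · by_cases hB : x = 1
    · subst hB
      have e1 : f1 n 1 = 2*n := by simp [f1]
      have e2 : f1 n (2*n) = 1 := by simp [f1]
      rw [e1, e2]
      refine ⟨by rw [mem_ground]; omega, rfl, by omega⟩
    · by_cases hC : x % 2 = 0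
      · have e1 : f1 n x = x + 1 := by simp [f1, hA, hB, hC]
        have hx2' : x + 1 ≤ 2*n := by omega
        have e2 : f1 n (x+1) = x := by
          have : ¬ (x+1) % 2 = 0 := by omega
          have h1 : ¬ (x+1) = 2*n := by omega
          have h2 : ¬ (x+1) = 1 := by omega
          simp [f1, h1, h2, this]; omega
        rw [e1, e2]
        refine ⟨by rw [mem_ground]; omega, rfl, by omega⟩
      · have e1 : f1 n x = x - 1 := by simp [f1, hA, hB, hC]
        have hx3 : 3 ≤ x := by omega
        have e2 : f1 n (x-1) = x := by
          have h1 : ¬ (x-1) = 2*n := by omega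
          have h2 : ¬ (x-1) = 1 := by omega
          have h3 : (x-1) % 2 = 0 := by omega
          simp [f1, h1, h2, h3]; omega
        rw [e1, e2]
        refine ⟨by rw [mem_ground]; omega, rfl, by omega⟩

theorem good_f2 {n : ℕ} : GoodInvol n f2 := by
  intro x hx
  rw [mem_ground] at hx
  by_cases hC : x % 2 = 0
  · have e1 : f2 x = x - 1 := by simp [f2, hC]
    have e2 : f2 (x-1) = x := by
      have : ¬ (x-1) % 2 = 0 := by omega
      simp [f2, this]; omega
    rw [e1, e2]
    refine ⟨by rw [mem_ground]; omega, rfl, by omega⟩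
  · have e1 : f2 x = x + 1 := by simp [f2, hC]
    have e2 : f2 (x+1) = x := by
      have : (x+1) % 2 = 0 := by omega
      simp [f2, this]
    rw [e1, e2]
    refine ⟨by rw [mem_ground]; omega, rfl, by omega⟩

section Orbits

variable {n : ℕ} {f g : ℕ → ℕ}

/-- `h = g ∘ f` -/
theorem h_mem (hf : GoodInvol n f) (hg : GoodInvol n g) {x} (hx : x ∈ groundSet n) :
    (g ∘ f) x ∈ groundSet n := (hg _ (hf x hx).1).1

theorem iter_mem (hf : GoodInvol n f) (hg : GoodInvol n g) {x} (hx : x ∈ groundSet n) (m : ℕ) :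
    (g ∘ f)^[m] x ∈ groundSet n := by
  induction m with
  | zero => simpa
  | succ m ih => rw [Function.iterate_succ_apply']; exact h_mem hf hg ih

theorem h'_h (hf : GoodInvol n f) (hg : GoodInvol n g) {x} (hx : x ∈ groundSet n) :
    (f ∘ g) ((g ∘ f) x) = x := by
  have h1 := (hf x hx).1
  simp only [Function.comp_apply]
  rw [(hg _ h1).2.1, (hf x hx).2.1]

theorem h_h' (hf : GoodInvol n f) (hg : GoodInvol n g) {x} (hx : x ∈ groundSet n) :
    (g ∘ f) ((f ∘ g) x) = x := by
  have h1 := (hg x hx).1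
  simp only [Function.comp_apply]
  rw [(hf _ h1).2.1, (hg x hx).2.1]

theorem h_injOn (hf : GoodInvol n f) (hg : GoodInvol n g) :
    Set.InjOn (g ∘ f) (groundSet n) := by
  intro x hx y hy hxy
  have := h'_h hf hg hx
  rw [hxy, h'_h hf hg hy] at this
  exact this.symm

theorem iter_injOn (hf : GoodInvol n f) (hg : GoodInvol n g) (m : ℕ) :
    Set.InjOn ((g ∘ f)^[m]) (groundSet n) := by
  induction m with
  | zero => simp [Set.injOn_id]
  | succ m ih =>
    intro x hx y hy hxy
    rw [Function.iterate_succ_apply', Function.iterate_succ_apply'] at hxy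
    exact ih hx hy (h_injOn hf hg (iter_mem hf hg hx m) (iter_mem hf hg hy m) hxy)

theorem cancel (hf : GoodInvol n f) (hg : GoodInvol n g) {x : ℕ} (hx : x ∈ groundSet n)
    {a b : ℕ} (hab : a ≤ b) (he : (g ∘ f)^[a] x = (g ∘ f)^[b] x) :
    (g ∘ f)^[b - a] x = x := by
  have : (g∘f)^[b] x = (g∘f)^[a] ((g∘f)^[b-a] x) := by
    rw [← Function.iterate_add_apply]
    congr 1; omega
  rw [this] at he
  exact (iter_injOn hf hg a (iter_mem hf hg hx _) hx he.symm).symm ▸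
    (iter_injOn hf hg a (iter_mem hf hg hx _) hx he.symm)

theorem period (hf : GoodInvol n f) (hg : GoodInvol n g) {x : ℕ} (hx : x ∈ groundSet n) :
    ∃ d, 0 < d ∧ (g ∘ f)^[d] x = x := by
  have hmaps : ∀ m ∈ Finset.range ((groundSet n).card + 1), (g∘f)^[m] x ∈ groundSet n :=
    fun m _ => iter_mem hf hg hx m
  have hcard : (groundSet n).card < (Finset.range ((groundSet n).card + 1)).card := by
    simp
  obtain ⟨a, _, b, _, hne, he⟩ :=
    Finset.exists_ne_map_eq_of_card_lt_of_maps_to hcard hmaps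
  rcases Nat.lt_or_ge a b with hlt | hge
  · exact ⟨b - a, by omega, cancel hf hg hx (le_of_lt hlt) he⟩
  · have hlt : b < a := by omega
    exact ⟨a - b, by omega, cancel hf hg hx (le_of_lt hlt) he.symm⟩

theorem mem_fwd_self (h : ℕ → ℕ) (x : ℕ) : x ∈ fwdOrbit h x := ⟨0, rfl⟩

theorem fwd_subset (hf : GoodInvol n f) (hg : GoodInvol n g) {x} (hx : x ∈ groundSet n) :
    fwdOrbit (g ∘ f) x ⊆ groundSet n := by
  rintro y ⟨m, rfl⟩; exact iter_mem hf hg hx m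

theorem fwd_trans {h : ℕ → ℕ} {x y : ℕ} (hy : y ∈ fwdOrbit h x) :
    fwdOrbit h y ⊆ fwdOrbit h x := by
  obtain ⟨m, rfl⟩ := hy
  rintro z ⟨k, rfl⟩
  exact ⟨k + m, by rw [Function.iterate_add_apply]⟩

theorem fwd_symm (hf : GoodInvol n f) (hg : GoodInvol n g) {x y} (hx : x ∈ groundSet n)
    (hy : y ∈ fwdOrbit (g∘f) x) : x ∈ fwdOrbit (g∘f) y := by
  obtain ⟨m, rfl⟩ := hy
  obtain ⟨d, hd, hdx⟩ := period hf hg hx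
  -- x = h^[d*m - m] (h^[m] x)  since h^[d*m] x = x
  have hiter : ∀ k, (g∘f)^[d * k] x = x := by
    intro k
    induction k with
    | zero => simp
    | succ k ih => rw [Nat.mul_succ, Function.iterate_add_apply, hdx, ih]
  refine ⟨d * m - m, ?_⟩
  rw [← Function.iterate_add_apply]
  have : d * m - m + m = d * m := by
    have : m ≤ d * m := Nat.le_mul_of_pos_left m hd
    omega
  rw [this, hiter]

theorem fwd_eq_of_mem (hf : GoodInvol n f) (hg : GoodInvol n g) {x y} (hx : x ∈ groundSet n)
    (hy : y ∈ fwdOrbit (g∘f) x) : fwdOrbit (g∘f) y = fwdOrbit (g∘f) x :=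
  Set.Subset.antisymm (fwd_trans hy) (fwd_trans (fwd_symm hf hg hx hy))


theorem h'_mem_fwd (hf : GoodInvol n f) (hg : GoodInvol n g) {x} (hx : x ∈ groundSet n) :
    (f ∘ g) x ∈ fwdOrbit (g∘f) x := by
  obtain ⟨d, hd, hdx⟩ := period hf hg hx
  refine ⟨d - 1, ?_⟩
  have h1 : (g∘f)^[d] x = x := hdx
  have h2 : (g∘f) ((g∘f)^[d-1] x) = x := by
    have e : (g∘f)^[d-1+1] x = x := by rw [show d-1+1=d by omega, hdx]
    rwa [Function.iterate_succ_apply'] at e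
  have h3 : (f∘g) x = (f∘g) ((g∘f) ((g∘f)^[d-1] x)) := by rw [h2]
  rw [h3, h'_h hf hg (iter_mem hf hg hx _)]

theorem f_fwd_mem (hf : GoodInvol n f) (hg : GoodInvol n g) {x y} (hx : x ∈ groundSet n)
    (hy : y ∈ fwdOrbit (g∘f) x) : f y ∈ fwdOrbit (g∘f) (f x) := by
  obtain ⟨m, rfl⟩ := hy
  induction m with
  | zero => exact mem_fwd_self _ _
  | succ m ih =>
    have hu : (g∘f)^[m] x ∈ groundSet n := iter_mem hf hg hx m
    have e : f ((g∘f)^[m+1] x) = (f∘g) (f ((g∘f)^[m] x)) := by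
      rw [Function.iterate_succ_apply']
      rfl
    rw [e]
    have hfu : f ((g∘f)^[m] x) ∈ groundSet n := (hf _ hu).1
    have h1 : (f∘g) (f ((g∘f)^[m] x)) ∈ fwdOrbit (g∘f) (f ((g∘f)^[m] x)) :=
      h'_mem_fwd hf hg hfu
    have h2 : fwdOrbit (g∘f) (f ((g∘f)^[m] x)) = fwdOrbit (g∘f) (f x) :=
      fwd_eq_of_mem hf hg (hf x hx).1 ih
    rw [h2] at h1; exact h1

theorem f_not_mem_fwd (hf : GoodInvol n f) (hg : GoodInvol n g) {x} (hx : x ∈ groundSet n) :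
    f x ∉ fwdOrbit (g∘f) x := by
  rintro ⟨m, hm⟩
  have key : ∀ j, j ≤ m → f ((g∘f)^[j] x) = (g∘f)^[m-j] x := by
    intro j
    induction j with
    | zero => intro _; simpa using hm.symm
    | succ j ih =>
      intro hj
      have hj' : j ≤ m := by omega
      have hu : (g∘f)^[j] x ∈ groundSet n := iter_mem hf hg hx j
      have e : f ((g∘f)^[j+1] x) = (f∘g) (f ((g∘f)^[j] x)) := by
        rw [Function.iterate_succ_apply']; rfl
      rw [e, ih hj']
      have h1 : m - j = (m - (j+1)) + 1 := by omega
      rw [h1, Function.iterate_succ_apply']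
      exact h'_h hf hg (iter_mem hf hg hx _)
  rcases Nat.even_or_odd m with ⟨j, hj⟩ | ⟨j, hj⟩
  · have hjm : j ≤ m := by omega
    have := key j hjm
    have hmj : m - j = j := by omega
    rw [hmj] at this
    exact (hf _ (iter_mem hf hg hx j)).2.2 this
  · have hjm : j + 1 ≤ m := by omega
    have h2 := key (j+1) hjm
    have hmj : m - (j+1) = j := by omega
    rw [hmj] at h2
    -- h2 : f ((g∘f)^[j+1] x) = (g∘f)^[j] x
    set u := (g∘f)^[j] x with hu
    have hug : u ∈ groundSet n := iter_mem hf hg hx j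
    have e : (g∘f)^[j+1] x = (g∘f) u := by rw [Function.iterate_succ_apply']
    rw [e] at h2
    -- f ((g∘f) u) = u
    have hhu : (g∘f) u ∈ groundSet n := h_mem hf hg hug
    have h3 : f (f ((g∘f) u)) = (g∘f) u := (hf _ hhu).2.1
    rw [h2] at h3
    -- f u = (g∘f) u = g (f u)
    have hfu : f u ∈ groundSet n := (hf _ hug).1
    exact (hg _ hfu).2.2 h3.symm

theorem fwd_f_disj (hf : GoodInvol n f) (hg : GoodInvol n g) {x} (hx : x ∈ groundSet n) :
    Disjoint (fwdOrbit (g∘f) x) (fwdOrbit (g∘f) (f x)) := by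
  rw [Set.disjoint_left]
  intro y hy1 hy2
  have h1 : fwdOrbit (g∘f) y = fwdOrbit (g∘f) x := fwd_eq_of_mem hf hg hx hy1
  have h2 : fwdOrbit (g∘f) y = fwdOrbit (g∘f) (f x) := fwd_eq_of_mem hf hg (hf x hx).1 hy2
  have : f x ∈ fwdOrbit (g∘f) x := by
    rw [← h1, h2]; exact mem_fwd_self _ _
  exact f_not_mem_fwd hf hg hx this

open scoped Classical in
noncomputable def orbF (n : ℕ) (h : ℕ → ℕ) (x : ℕ) : Finset ℕ :=
  (groundSet n).filter (· ∈ fwdOrbit h x)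

theorem mem_orbF (hf : GoodInvol n f) (hg : GoodInvol n g) {x y} (hx : x ∈ groundSet n) :
    y ∈ orbF n (g∘f) x ↔ y ∈ fwdOrbit (g∘f) x := by
  classical
  simp only [orbF, Finset.mem_filter]
  constructor
  · exact fun h => h.2
  · exact fun h => ⟨fwd_subset hf hg hx h, h⟩

theorem coe_orbF (hf : GoodInvol n f) (hg : GoodInvol n g) {x} (hx : x ∈ groundSet n) :
    (orbF n (g∘f) x : Set ℕ) = fwdOrbit (g∘f) x := by
  ext y; simpa using mem_orbF hf hg hx

theorem orbF_subset (x : ℕ) : orbF n (g∘f) x ⊆ groundSet n := by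
  classical
  exact Finset.filter_subset _ _

theorem mem_orbF_self (hf : GoodInvol n f) (hg : GoodInvol n g) {x} (hx : x ∈ groundSet n) :
    x ∈ orbF n (g∘f) x := (mem_orbF hf hg hx).2 (mem_fwd_self _ _)

theorem orbF_eq_of_mem (hf : GoodInvol n f) (hg : GoodInvol n g) {x y} (hx : x ∈ groundSet n)
    (hy : y ∈ orbF n (g∘f) x) : orbF n (g∘f) y = orbF n (g∘f) x := by
  classical
  simp only [orbF]
  congr 1
  ext z
  rw [fwd_eq_of_mem hf hg hx ((mem_orbF hf hg hx).1 hy)]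

theorem f_image_orbF (hf : GoodInvol n f) (hg : GoodInvol n g) {x} (hx : x ∈ groundSet n) :
    (orbF n (g∘f) x).image f = orbF n (g∘f) (f x) := by
  have hfx : f x ∈ groundSet n := (hf x hx).1
  ext z
  simp only [Finset.mem_image]
  constructor
  · rintro ⟨y, hy, rfl⟩
    exact (mem_orbF hf hg hfx).2 (f_fwd_mem hf hg hx ((mem_orbF hf hg hx).1 hy))
  · intro hz
    have hzG : z ∈ groundSet n := orbF_subset (f x) hz
    have h1 : f z ∈ fwdOrbit (g∘f) (f (f x)) :=
      f_fwd_mem hf hg hfx ((mem_orbF hf hg hfx).1 hz)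
    rw [(hf x hx).2.1] at h1
    exact ⟨f z, (mem_orbF hf hg hx).2 h1, (hf z hzG).2.1⟩

theorem card_orbF_f (hf : GoodInvol n f) (hg : GoodInvol n g) {x} (hx : x ∈ groundSet n) :
    (orbF n (g∘f) (f x)).card = (orbF n (g∘f) x).card := by
  rw [← f_image_orbF hf hg hx]
  apply Finset.card_image_of_injOn
  intro a ha b hb hab
  have haG : a ∈ groundSet n := orbF_subset x (Finset.mem_coe.1 ha)
  have hbG : b ∈ groundSet n := orbF_subset x (Finset.mem_coe.1 hb)
  have := (hf a haG).2.1
  rw [hab, (hf b hbG).2.1] at this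
  exact this.symm

theorem orbF_f_disj (hf : GoodInvol n f) (hg : GoodInvol n g) {x} (hx : x ∈ groundSet n) :
    Disjoint (orbF n (g∘f) x) (orbF n (g∘f) (f x)) := by
  rw [Finset.disjoint_left]
  intro y hy1 hy2
  have := fwd_f_disj hf hg hx
  rw [Set.disjoint_left] at this
  exact this ((mem_orbF hf hg hx).1 hy1) ((mem_orbF hf hg (hf x hx).1).1 hy2)


noncomputable def gorbF (n : ℕ) (f g : ℕ → ℕ) (x : ℕ) : Finset ℕ :=
  orbF n (g∘f) x ∪ orbF n (g∘f) (f x)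

theorem gorbF_subset (x : ℕ) : gorbF n f g x ⊆ groundSet n :=
  Finset.union_subset (orbF_subset x) (orbF_subset (f x))

theorem mem_gorbF_self (hf : GoodInvol n f) (hg : GoodInvol n g) {x} (hx : x ∈ groundSet n) :
    x ∈ gorbF n f g x := Finset.mem_union_left _ (mem_orbF_self hf hg hx)

theorem card_gorbF (hf : GoodInvol n f) (hg : GoodInvol n g) {x} (hx : x ∈ groundSet n) :
    (gorbF n f g x).card = 2 * (orbF n (g∘f) x).card := by
  rw [gorbF, Finset.card_union_of_disjoint (orbF_f_disj hf hg hx), card_orbF_f hf hg hx]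
  ring

theorem h_mem_orbF (hf : GoodInvol n f) (hg : GoodInvol n g) {x z} (hx : x ∈ groundSet n)
    (hz : z ∈ orbF n (g∘f) x) : (g∘f) z ∈ orbF n (g∘f) x := by
  have hzG : z ∈ groundSet n := orbF_subset x hz
  have e := orbF_eq_of_mem hf hg hx hz
  rw [← e]
  exact (mem_orbF hf hg hzG).2 ⟨1, rfl⟩

theorem stable_f_gorbF (hf : GoodInvol n f) (hg : GoodInvol n g) {x} (hx : x ∈ groundSet n) :
    ∀ y ∈ gorbF n f g x, f y ∈ gorbF n f g x := by
  intro y hy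
  rcases Finset.mem_union.1 hy with hy1 | hy2
  · apply Finset.mem_union_right
    rw [← f_image_orbF hf hg hx]
    exact Finset.mem_image_of_mem f hy1
  · apply Finset.mem_union_left
    have := Finset.mem_image_of_mem f hy2
    rw [f_image_orbF hf hg (hf x hx).1, (hf x hx).2.1] at this
    exact this

theorem stable_g_gorbF (hf : GoodInvol n f) (hg : GoodInvol n g) {x} (hx : x ∈ groundSet n) :
    ∀ y ∈ gorbF n f g x, g y ∈ gorbF n f g x := by
  intro y hy
  have hyG : y ∈ groundSet n := gorbF_subset x hy
  have hgy : g y = (g∘f) (f y) := by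
    simp only [Function.comp_apply]
    rw [(hf y hyG).2.1]
  rcases Finset.mem_union.1 hy with hy1 | hy2
  · apply Finset.mem_union_right
    have hfy : f y ∈ orbF n (g∘f) (f x) := by
      rw [← f_image_orbF hf hg hx]; exact Finset.mem_image_of_mem f hy1
    rw [hgy]
    exact h_mem_orbF hf hg (hf x hx).1 hfy
  · apply Finset.mem_union_left
    have hfy : f y ∈ orbF n (g∘f) x := by
      have := Finset.mem_image_of_mem f hy2
      rwa [f_image_orbF hf hg (hf x hx).1, (hf x hx).2.1] at this
    rw [hgy]
    exact h_mem_orbF hf hg hx hfy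

theorem gorbF_eq_of_mem (hf : GoodInvol n f) (hg : GoodInvol n g) {x y} (hx : x ∈ groundSet n)
    (hy : y ∈ gorbF n f g x) : gorbF n f g y = gorbF n f g x := by
  have hyG : y ∈ groundSet n := gorbF_subset x hy
  rcases Finset.mem_union.1 hy with hy1 | hy2
  · have e1 : orbF n (g∘f) y = orbF n (g∘f) x := orbF_eq_of_mem hf hg hx hy1
    have e2 : orbF n (g∘f) (f y) = orbF n (g∘f) (f x) := by
      apply orbF_eq_of_mem hf hg (hf x hx).1
      rw [← f_image_orbF hf hg hx]
      exact Finset.mem_image_of_mem f hy1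
    rw [gorbF, gorbF, e1, e2]
  · have e1 : orbF n (g∘f) y = orbF n (g∘f) (f x) := orbF_eq_of_mem hf hg (hf x hx).1 hy2
    have e2 : orbF n (g∘f) (f y) = orbF n (g∘f) x := by
      apply orbF_eq_of_mem hf hg hx
      have := Finset.mem_image_of_mem f hy2
      rwa [f_image_orbF hf hg (hf x hx).1, (hf x hx).2.1] at this
    rw [gorbF, gorbF, e1, e2, Finset.union_comm]

theorem gorbF_min (hf : GoodInvol n f) (hg : GoodInvol n g) {x} (hx : x ∈ groundSet n)
    {B : Finset ℕ} (hBf : ∀ y ∈ B, f y ∈ B) (hBg : ∀ y ∈ B, g y ∈ B) (hxB : x ∈ B) :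
    gorbF n f g x ⊆ B := by
  have horb : ∀ z, z ∈ B → ∀ m, (g∘f)^[m] z ∈ B := by
    intro z hz m
    induction m with
    | zero => simpa
    | succ m ih => rw [Function.iterate_succ_apply']; exact hBg _ (hBf _ ih)
  intro y hy
  rcases Finset.mem_union.1 hy with hy1 | hy2
  · obtain ⟨m, rfl⟩ := (mem_orbF hf hg hx).1 hy1
    exact horb x hxB m
  · obtain ⟨m, rfl⟩ := (mem_orbF hf hg (hf x hx).1).1 hy2
    exact horb (f x) (hBf x hxB) m

noncomputable def Orbs (n : ℕ) (f g : ℕ → ℕ) : Finset (Finset ℕ) :=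
  (groundSet n).image (orbF n (g∘f))

noncomputable def Gorbs (n : ℕ) (f g : ℕ → ℕ) : Finset (Finset ℕ) :=
  (groundSet n).image (gorbF n f g)

theorem Gorbs_disj (hf : GoodInvol n f) (hg : GoodInvol n g) {B B' : Finset ℕ}
    (hB : B ∈ Gorbs n f g) (hB' : B' ∈ Gorbs n f g) (hne : B ≠ B') : Disjoint B B' := by
  obtain ⟨x, hx, rfl⟩ := Finset.mem_image.1 hB
  obtain ⟨y, hy, rfl⟩ := Finset.mem_image.1 hB'
  rw [Finset.disjoint_left]
  intro z hz1 hz2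
  exact hne ((gorbF_eq_of_mem hf hg hx hz1).symm.trans (gorbF_eq_of_mem hf hg hy hz2))

theorem Gorbs_cover (hf : GoodInvol n f) (hg : GoodInvol n g) :
    (Gorbs n f g).biUnion id = groundSet n := by
  apply Finset.Subset.antisymm
  · intro z hz
    obtain ⟨B, hB, hzB⟩ := Finset.mem_biUnion.1 hz
    obtain ⟨x, hx, rfl⟩ := Finset.mem_image.1 hB
    exact gorbF_subset x hzB
  · intro x hx
    exact Finset.mem_biUnion.2 ⟨gorbF n f g x, Finset.mem_image_of_mem _ hx,
      mem_gorbF_self hf hg hx⟩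

theorem Gorbs_elt (hf : GoodInvol n f) (hg : GoodInvol n g) {B : Finset ℕ}
    (hB : B ∈ Gorbs n f g) :
    ∃ x ∈ groundSet n, B = gorbF n f g x ∧ B.card = 2 * (orbF n (g∘f) x).card ∧
      0 < (orbF n (g∘f) x).card := by
  obtain ⟨x, hx, rfl⟩ := Finset.mem_image.1 hB
  exact ⟨x, hx, rfl, card_gorbF hf hg hx,
    Finset.card_pos.2 ⟨x, mem_orbF_self hf hg hx⟩⟩

theorem sum_card_Gorbs (hf : GoodInvol n f) (hg : GoodInvol n g) :
    ∑ B ∈ Gorbs n f g, B.card = 2 * n := by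
  have hd : ∀ B ∈ Gorbs n f g, ∀ B' ∈ Gorbs n f g, B ≠ B' → Disjoint (id B) (id B') :=
    fun B hB B' hB' hne => Gorbs_disj hf hg hB hB' hne
  have := Finset.card_biUnion hd
  rw [Gorbs_cover hf hg] at this
  have hG : (groundSet n).card = 2 * n := by
    rw [groundSet, Nat.card_Icc]; omega
  rw [← hG, this]
  simp

/-- The multiset of half-sizes of the group orbits. -/
noncomputable def lamMS (n : ℕ) (f g : ℕ → ℕ) : Multiset ℕ :=
  (Gorbs n f g).val.map (fun B => B.card / 2)

theorem lamMS_sum (hf : GoodInvol n f) (hg : GoodInvol n g) : (lamMS n f g).sum = n := by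
  have h2 : 2 * (lamMS n f g).sum = 2 * n := by
    rw [lamMS]
    have : ((Gorbs n f g).val.map (fun B => B.card / 2)).sum
        = ∑ B ∈ Gorbs n f g, (B.card / 2) := rfl
    rw [this, Finset.mul_sum]
    rw [← sum_card_Gorbs hf hg]
    apply Finset.sum_congr rfl
    intro B hB
    obtain ⟨x, hx, rfl, hcard, _⟩ := Gorbs_elt hf hg hB
    omega
  omega

theorem lamMS_pos (hf : GoodInvol n f) (hg : GoodInvol n g) :
    ∀ k ∈ lamMS n f g, 0 < k := by
  intro k hk
  rw [lamMS, Multiset.mem_map] at hk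
  obtain ⟨B, hB, rfl⟩ := hk
  obtain ⟨x, hx, rfl, hcard, hpos⟩ := Gorbs_elt hf hg (by exact hB)
  omega

/-- The partition of `n` formed by half-sizes of group orbits. -/
noncomputable def lamPart (n : ℕ) (f g : ℕ → ℕ) (hf : GoodInvol n f) (hg : GoodInvol n g) :
    Nat.Partition n where
  parts := lamMS n f g
  parts_pos := fun {k} hk => lamMS_pos hf hg k hk
  parts_sum := lamMS_sum hf hg


theorem Orbs_elt {B : Finset ℕ} (hB : B ∈ Orbs n f g) :
    ∃ x ∈ groundSet n, B = orbF n (g∘f) x := by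
  obtain ⟨x, hx, rfl⟩ := Finset.mem_image.1 hB
  exact ⟨x, hx, rfl⟩

theorem HCT_iff (hf : GoodInvol n f) (hg : GoodInvol n g) (M : Multiset ℕ) :
    HasCycleTypeOn n (g∘f) M ↔
      ∀ k, ((Orbs n f g).filter (fun B => B.card = k)).card = M.count k := by
  have key : ∀ k : ℕ,
      { S : Set ℕ | (∃ x ∈ groundSet n, S = fwdOrbit (g∘f) x) ∧ S.ncard = k }
        = (fun B : Finset ℕ => (B : Set ℕ)) ''
            ↑((Orbs n f g).filter (fun B => B.card = k)) := by
    intro k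
    ext S
    simp only [Set.mem_setOf_eq, Set.mem_image, Finset.mem_coe, Finset.mem_filter]
    constructor
    · rintro ⟨⟨x, hx, rfl⟩, hcard⟩
      refine ⟨orbF n (g∘f) x, ⟨Finset.mem_image_of_mem _ hx, ?_⟩, coe_orbF hf hg hx⟩
      rw [← hcard, ← coe_orbF hf hg hx, Set.ncard_coe_finset]
    · rintro ⟨B, ⟨hB, hcard⟩, rfl⟩
      obtain ⟨x, hx, rfl⟩ := Orbs_elt hB
      exact ⟨⟨x, hx, (coe_orbF hf hg hx)⟩, by rw [Set.ncard_coe_finset, hcard]⟩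
  constructor
  · intro H k
    have := H k
    rw [key k, Set.ncard_image_of_injective _ Finset.coe_injective,
      Set.ncard_coe_finset] at this
    exact this
  · intro H k
    rw [key k, Set.ncard_image_of_injective _ Finset.coe_injective,
      Set.ncard_coe_finset]
    exact H k

theorem countOrb_eq (hf : GoodInvol n f) (hg : GoodInvol n g) (k : ℕ) :
    ((Orbs n f g).filter (fun B => B.card = k)).card
      = 2 * ((Gorbs n f g).filter (fun B => B.card = 2 * k)).card := by
  classical
  have hunion : (Orbs n f g).filter (fun B => B.card = k)
      = ((Gorbs n f g).filter (fun B => B.card = 2*k)).biUnion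
          (fun B => (Orbs n f g).filter (fun O => O ⊆ B ∧ O.card = k)) := by
    ext O
    simp only [Finset.mem_filter, Finset.mem_biUnion]
    constructor
    · rintro ⟨hO, hcard⟩
      obtain ⟨x, hx, rfl⟩ := Orbs_elt hO
      refine ⟨gorbF n f g x, ⟨Finset.mem_image_of_mem _ hx, ?_⟩, hO,
        Finset.subset_union_left, hcard⟩
      rw [card_gorbF hf hg hx, hcard]
    · rintro ⟨B, _, hO, _, hcard⟩
      exact ⟨hO, hcard⟩
  rw [hunion, Finset.card_biUnion ?disj]
  case disj =>
    intro B hB B' hB' hne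
    rw [Function.onFun, Finset.disjoint_left]
    intro O hO1 hO2
    simp only [Finset.mem_coe, Finset.mem_filter] at hO1 hO1 hO2 hB hB'
    obtain ⟨x, hx, rfl⟩ := Orbs_elt hO1.1
    have hxB : x ∈ B := hO1.2.1 (mem_orbF_self hf hg hx)
    have hxB' : x ∈ B' := hO2.2.1 (mem_orbF_self hf hg hx)
    have := Gorbs_disj hf hg hB.1 hB'.1 hne
    rw [Finset.disjoint_left] at this
    exact this hxB hxB'
  have hterm : ∀ B ∈ (Gorbs n f g).filter (fun B => B.card = 2*k),
      ((Orbs n f g).filter (fun O => O ⊆ B ∧ O.card = k)).card = 2 := by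
    intro B hB
    rw [Finset.mem_filter] at hB
    obtain ⟨x, hx, rfl, hcard, hpos⟩ := Gorbs_elt hf hg hB.1
    have hk : (orbF n (g∘f) x).card = k := by omega
    have hset : (Orbs n f g).filter (fun O => O ⊆ gorbF n f g x ∧ O.card = k)
        = {orbF n (g∘f) x, orbF n (g∘f) (f x)} := by
      ext O
      simp only [Finset.mem_filter, Finset.mem_insert, Finset.mem_singleton]
      constructor
      · rintro ⟨hO, hsub, _⟩
        obtain ⟨y, hy, rfl⟩ := Orbs_elt hO
        have hyg : y ∈ gorbF n f g x := hsub (mem_orbF_self hf hg hy)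
        rcases Finset.mem_union.1 hyg with h1 | h1
        · exact Or.inl (orbF_eq_of_mem hf hg hx h1)
        · exact Or.inr (orbF_eq_of_mem hf hg (hf x hx).1 h1)
      · rintro (rfl | rfl)
        · exact ⟨Finset.mem_image_of_mem _ hx, Finset.subset_union_left, hk⟩
        · refine ⟨Finset.mem_image_of_mem _ (hf x hx).1, Finset.subset_union_right, ?_⟩
          rw [card_orbF_f hf hg hx, hk]
    rw [hset]
    have hne : orbF n (g∘f) x ≠ orbF n (g∘f) (f x) := by
      intro he
      have hd := orbF_f_disj hf hg hx
      rw [he, disjoint_self] at hd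
      have hmem := mem_orbF_self hf hg (hf x hx).1
      rw [hd] at hmem
      simp at hmem
    rw [Finset.card_insert_of_notMem (by simpa using hne), Finset.card_singleton]
  rw [Finset.sum_congr rfl hterm, Finset.sum_const, smul_eq_mul, mul_comm]

theorem count_lamMS (hf : GoodInvol n f) (hg : GoodInvol n g) (k : ℕ) :
    (lamMS n f g).count k = ((Gorbs n f g).filter (fun B => B.card = 2 * k)).card := by
  classical
  rw [lamMS, Multiset.count_map]
  have : (Multiset.filter (fun B => k = B.card / 2) (Gorbs n f g).val)
      = (Multiset.filter (fun B => B.card = 2 * k) (Gorbs n f g).val) := by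
    apply Multiset.filter_congr
    intro B hB
    obtain ⟨x, hx, rfl, hcard, hpos⟩ := Gorbs_elt hf hg (by exact hB)
    constructor <;> intro h <;> omega
  rw [this]
  rfl

theorem HCT_doubled_iff (hf : GoodInvol n f) (hg : GoodInvol n g) (μ : Multiset ℕ) :
    HasCycleTypeOn n (g∘f) (μ + μ) ↔ μ = lamMS n f g := by
  rw [HCT_iff hf hg]
  constructor
  · intro H
    ext k
    have := H k
    rw [countOrb_eq hf hg k, ← count_lamMS hf hg k, Multiset.count_add] at this
    omega
  · intro H k
    rw [countOrb_eq hf hg k, ← count_lamMS hf hg k, Multiset.count_add, ← H]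
    omega

end Orbits

/-- If two finsets have the same multiset of weights, there is a weight-preserving
bijection between them. -/
theorem exists_matching {α β : Type} [DecidableEq α] [DecidableEq β] [Nonempty β]
    (s : Finset α) (wa : α → ℕ) (wb : β → ℕ) :
    ∀ t : Finset β, s.val.map wa = t.val.map wb →
    ∃ φ : α → β, Set.InjOn φ ↑s ∧ s.image φ = t ∧ ∀ i ∈ s, wb (φ i) = wa i := by
  classical
  induction s using Finset.induction_on with
  | empty =>
    intro t ht
    simp only [Finset.empty_val, Multiset.map_zero] at ht
    have hc := congrArg Multiset.card ht
    simp at hc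
    have : t = ∅ := Finset.card_eq_zero.mp hc.symm
    subst this
    exact ⟨fun _ => Classical.arbitrary β, by simp, by simp, by simp⟩
  | @insert a s' ha ih =>
    intro t ht
    rw [Finset.insert_val_of_notMem ha, Multiset.map_cons] at ht
    have hmem : wa a ∈ t.val.map wb := by
      rw [← ht]; exact Multiset.mem_cons_self _ _
    obtain ⟨b, hb, hwb⟩ := Multiset.mem_map.1 hmem
    have hbt : b ∈ t := hb
    have ht' : s'.val.map wa = (t.erase b).val.map wb := by
      have e1 : t.val = b ::ₘ t.val.erase b := (Multiset.cons_erase hb).symm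
      rw [e1, Multiset.map_cons, hwb] at ht
      have := (Multiset.cons_inj_right _).mp ht
      rwa [Finset.erase_val]
    obtain ⟨φ', hinj, himg, hw⟩ := ih (t.erase b) ht'
    refine ⟨fun x => if x = a then b else φ' x, ?_, ?_, ?_⟩
    · intro x hx y hy hxy
      simp only [Finset.coe_insert, Set.mem_insert_iff, Finset.mem_coe] at hx hy
      by_cases hxa : x = a <;> by_cases hya : y = a
      · rw [hxa, hya]
      · exfalso
        have hys : y ∈ s' := hy.resolve_left hya
        simp only [hxa, if_pos rfl, if_neg hya] at hxy
        have : φ' y ∈ s'.image φ' := Finset.mem_image_of_mem _ hys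
        rw [himg, ← hxy] at this
        exact (Finset.notMem_erase b t) this
      · exfalso
        have hxs : x ∈ s' := hx.resolve_left hxa
        simp only [hya, if_pos rfl, if_neg hxa] at hxy
        have : φ' x ∈ s'.image φ' := Finset.mem_image_of_mem _ hxs
        rw [himg, hxy] at this
        exact (Finset.notMem_erase b t) this
      · simp only [if_neg hxa, if_neg hya] at hxy
        exact hinj (hx.resolve_left hxa) (hy.resolve_left hya) hxy
    · rw [Finset.image_insert, if_pos rfl]
      have : s'.image (fun x => if x = a then b else φ' x) = s'.image φ' := by
        apply Finset.image_congr
        intro x hx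
        have : x ≠ a := fun h => ha (h ▸ hx)
        simp [this]
      rw [this, himg, Finset.insert_erase hbt]
    · intro i hi
      rcases Finset.mem_insert.1 hi with rfl | his
      · simp [hwb]
      · have : i ≠ a := fun h => ha (h ▸ his)
        simp only [if_neg this]
        exact hw i his

/-- Mapping `i ↦ L.getD (i-1) 0` over `Icc 1 L.length` gives the multiset of `L`. -/
theorem map_Icc_getD (L : List ℕ) :
    (Finset.Icc 1 L.length).val.map (fun i => L.getD (i-1) 0) = (L : Multiset ℕ) := by
  induction L with
  | nil => simp
  | cons a L ih =>
    have h1 : Finset.Icc 1 (a :: L).length = insert 1 ((Finset.Icc 1 L.length).image (· + 1)) := by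
      ext i
      simp only [Finset.mem_Icc, Finset.mem_insert, Finset.mem_image, List.length_cons]
      constructor
      · intro ⟨h1, h2⟩
        by_cases he : i = 1
        · exact Or.inl he
        · exact Or.inr ⟨i - 1, by omega, by omega⟩
      · rintro (rfl | ⟨j, hj, rfl⟩) <;> omega
    rw [h1]
    have hnot : 1 ∉ (Finset.Icc 1 L.length).image (· + 1) := by
      simp only [Finset.mem_image, Finset.mem_Icc]
      rintro ⟨j, hj, hj1⟩
      omega
    rw [Finset.insert_val_of_notMem hnot, Multiset.map_cons]
    have h2 : ((Finset.Icc 1 L.length).image (· + 1)).val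
        = (Finset.Icc 1 L.length).val.map (· + 1) := by
      rw [Finset.image_val, Multiset.dedup_eq_self.2]
      apply Multiset.Nodup.map
      · exact fun x y h => by omega
      · exact (Finset.Icc 1 L.length).nodup
    rw [h2, Multiset.map_map]
    have h3 : ∀ i ∈ (Finset.Icc 1 L.length).val,
        ((fun i => (a :: L).getD (i-1) 0) ∘ (· + 1)) i = L.getD (i-1) 0 := by
      intro i hi
      have : 1 ≤ i := by
        have := Finset.mem_Icc.1 (Finset.mem_val ▸ hi)
        exact this.1
      simp only [Function.comp_apply]
      have e : i + 1 - 1 = i := by omega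
      rw [e]
      have e2 : i = (i - 1) + 1 := by omega
      rw [e2]
      simp [List.getD]
    rw [Multiset.map_congr rfl h3]
    rw [show ((a :: L : List ℕ) : Multiset ℕ) = a ::ₘ (L : Multiset ℕ) from rfl]
    congr 1

section Count

variable {n : ℕ} {f g : ℕ → ℕ}

theorem card_stable_partitions (hf : GoodInvol n f) (hg : GoodInvol n g)
    (L : List ℕ) (hL : (L : Multiset ℕ) = lamMS n f g) (ν : Multiset ℕ) :
    {π : Finset (Finset ℕ) | IsSetPartition n π ∧
      (∀ B ∈ π, StableUnder f B ∧ StableUnder g B) ∧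
      π.val.map (fun B => B.card / 2) = ν}.ncard
    = {π : Finset (Finset ℕ) |
        (∀ B ∈ π, B.Nonempty) ∧ (∀ B ∈ π, B ⊆ Finset.Icc 1 L.length) ∧
        (∀ x ∈ Finset.Icc 1 L.length, ∃! B, B ∈ π ∧ x ∈ B) ∧
        π.val.map (fun B => B.sum fun i => L.getD (i - 1) 0) = ν}.ncard := by
  classical
  set ℓ := L.length with hℓ
  set w : ℕ → ℕ := fun i => L.getD (i - 1) 0 with hwdef
  have hmm : (Finset.Icc 1 ℓ).val.map w = (Gorbs n f g).val.map (fun B => B.card / 2) := by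
    rw [hwdef, hℓ, map_Icc_getD L, hL, lamMS]
  obtain ⟨φ, hφinj, hφimg, hφw⟩ := exists_matching (Finset.Icc 1 ℓ) w
    (fun B => B.card / 2) (Gorbs n f g) hmm
  have hφmem : ∀ i ∈ Finset.Icc 1 ℓ, φ i ∈ Gorbs n f g := by
    intro i hi; rw [← hφimg]; exact Finset.mem_image_of_mem _ hi
  have hφcard : ∀ i ∈ Finset.Icc 1 ℓ, (φ i).card = 2 * w i := by
    intro i hi
    obtain ⟨x, hx, he, hc, hpos⟩ := Gorbs_elt hf hg (hφmem i hi)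
    have := hφw i hi
    omega
  have hφne : ∀ i ∈ Finset.Icc 1 ℓ, (φ i).Nonempty := by
    intro i hi
    obtain ⟨x, hx, he, hc, hpos⟩ := Gorbs_elt hf hg (hφmem i hi)
    exact Finset.card_pos.1 (by omega)
  have hφsub : ∀ i ∈ Finset.Icc 1 ℓ, φ i ⊆ groundSet n := by
    intro i hi
    obtain ⟨x, hx, he, _, _⟩ := Gorbs_elt hf hg (hφmem i hi)
    rw [he]; exact gorbF_subset x
  have hgid : ∀ i ∈ Finset.Icc 1 ℓ, ∀ x ∈ φ i, gorbF n f g x = φ i := by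
    intro i hi x hx
    obtain ⟨y, hy, he, _, _⟩ := Gorbs_elt hf hg (hφmem i hi)
    rw [he] at hx ⊢
    exact gorbF_eq_of_mem hf hg hy hx
  have hφstf : ∀ i ∈ Finset.Icc 1 ℓ, ∀ y ∈ φ i, f y ∈ φ i := by
    intro i hi y hy
    obtain ⟨x, hx, he, _, _⟩ := Gorbs_elt hf hg (hφmem i hi)
    rw [he] at hy ⊢; exact stable_f_gorbF hf hg hx y hy
  have hφstg : ∀ i ∈ Finset.Icc 1 ℓ, ∀ y ∈ φ i, g y ∈ φ i := by
    intro i hi y hy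
    obtain ⟨x, hx, he, _, _⟩ := Gorbs_elt hf hg (hφmem i hi)
    rw [he] at hy ⊢; exact stable_g_gorbF hf hg hx y hy
  have hdisj : ∀ i ∈ Finset.Icc 1 ℓ, ∀ j ∈ Finset.Icc 1 ℓ, i ≠ j → Disjoint (φ i) (φ j) := by
    intro i hi j hj hij
    exact Gorbs_disj hf hg (hφmem i hi) (hφmem j hj)
      (fun he => hij (hφinj hi hj he))
  set F : Finset ℕ → Finset ℕ := fun b => b.biUnion φ with hFdef
  set rb : Finset ℕ → Finset ℕ := fun C => (Finset.Icc 1 ℓ).filter (fun i => φ i ⊆ C)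
    with hrbdef
  have hrbF : ∀ b : Finset ℕ, b ⊆ Finset.Icc 1 ℓ → rb (F b) = b := by
    intro b hb
    ext i
    simp only [hrbdef, hFdef, Finset.mem_filter]
    constructor
    · rintro ⟨hi, hsub⟩
      obtain ⟨z, hz⟩ := hφne i hi
      obtain ⟨j, hj, hzj⟩ := Finset.mem_biUnion.1 (hsub hz)
      have hij : i = j := by
        by_contra hne
        have := hdisj i hi j (hb hj) hne
        rw [Finset.disjoint_left] at this
        exact this hz hzj
      rwa [hij]
    · intro hib
      refine ⟨hb hib, fun z hz => Finset.mem_biUnion.2 ⟨i, hib, hz⟩⟩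
  have hcardF : ∀ b : Finset ℕ, b ⊆ Finset.Icc 1 ℓ → (F b).card = ∑ i ∈ b, (φ i).card := by
    intro b hb
    apply Finset.card_biUnion
    intro i hi j hj hij
    exact hdisj i (hb hi) j (hb hj) hij
  have hhalfF : ∀ b : Finset ℕ, b ⊆ Finset.Icc 1 ℓ → (F b).card / 2 = b.sum w := by
    intro b hb
    rw [hcardF b hb]
    have : ∑ i ∈ b, (φ i).card = 2 * b.sum w := by
      rw [Finset.mul_sum]
      exact Finset.sum_congr rfl (fun i hi => hφcard i (hb hi))
    omega
  -- The bijection between the two sets of partitions.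
  have hSetEq : {π : Finset (Finset ℕ) | IsSetPartition n π ∧
      (∀ B ∈ π, StableUnder f B ∧ StableUnder g B) ∧
      π.val.map (fun B => B.card / 2) = ν}
      = (fun π : Finset (Finset ℕ) => π.image F) ''
        {π : Finset (Finset ℕ) |
          (∀ B ∈ π, B.Nonempty) ∧ (∀ B ∈ π, B ⊆ Finset.Icc 1 ℓ) ∧
          (∀ x ∈ Finset.Icc 1 ℓ, ∃! B, B ∈ π ∧ x ∈ B) ∧
          π.val.map (fun B => B.sum w) = ν} := by
    ext π'
    simp only [Set.mem_setOf_eq, Set.mem_image]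
    constructor
    · rintro ⟨⟨hne, hsubG, hcover⟩, hstab, hhalf⟩
      -- surjectivity direction: build the preimage
      have hCeq : ∀ C ∈ π', C = F (rb C) := by
        intro C hC
        apply Finset.Subset.antisymm
        · intro x hx
          have hxG : x ∈ groundSet n := hsubG C hC hx
          have hgsub : gorbF n f g x ⊆ C :=
            gorbF_min hf hg hxG (hstab C hC).1 (hstab C hC).2 hx
          have : gorbF n f g x ∈ Gorbs n f g := Finset.mem_image_of_mem _ hxG
          rw [← hφimg] at this
          obtain ⟨i, hi, hie⟩ := Finset.mem_image.1 this
          apply Finset.mem_biUnion.2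
          refine ⟨i, ?_, ?_⟩
          · simp only [hrbdef, Finset.mem_filter]
            exact ⟨hi, by rw [hie]; exact hgsub⟩
          · rw [hie]; exact mem_gorbF_self hf hg hxG
        · intro x hx
          obtain ⟨i, hi, hxi⟩ := Finset.mem_biUnion.1 hx
          simp only [hrbdef, Finset.mem_filter] at hi
          exact hi.2 hxi
      have hrbinj : Set.InjOn rb ↑π' := by
        intro C1 hC1 C2 hC2 he
        rw [hCeq C1 hC1, hCeq C2 hC2, he]
      refine ⟨π'.image rb, ⟨?_, ?_, ?_, ?_⟩, ?_⟩
      · -- nonempty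
        intro b hb
        obtain ⟨C, hC, rfl⟩ := Finset.mem_image.1 hb
        obtain ⟨x, hx⟩ := hne C hC
        have hxG : x ∈ groundSet n := hsubG C hC hx
        have hgsub : gorbF n f g x ⊆ C :=
          gorbF_min hf hg hxG (hstab C hC).1 (hstab C hC).2 hx
        have : gorbF n f g x ∈ Gorbs n f g := Finset.mem_image_of_mem _ hxG
        rw [← hφimg] at this
        obtain ⟨i, hi, hie⟩ := Finset.mem_image.1 this
        refine ⟨i, ?_⟩
        simp only [hrbdef, Finset.mem_filter]
        exact ⟨hi, by rw [hie]; exact hgsub⟩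
      · -- subset Icc
        intro b hb
        obtain ⟨C, hC, rfl⟩ := Finset.mem_image.1 hb
        exact Finset.filter_subset _ _
      · -- cover
        intro i hi
        obtain ⟨x, hx⟩ := hφne i hi
        have hxG : x ∈ groundSet n := hφsub i hi hx
        obtain ⟨C, ⟨hC, hxC⟩, huniq⟩ := hcover x hxG
        have hiC : i ∈ rb C := by
          simp only [hrbdef, Finset.mem_filter]
          refine ⟨hi, ?_⟩
          rw [← hgid i hi x hx]
          exact gorbF_min hf hg hxG (hstab C hC).1 (hstab C hC).2 hxC
        refine ⟨rb C, ⟨Finset.mem_image_of_mem _ hC, hiC⟩, ?_⟩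
        rintro b' ⟨hb', hib'⟩
        obtain ⟨C', hC', rfl⟩ := Finset.mem_image.1 hb'
        have : x ∈ C' := by
          simp only [hrbdef, Finset.mem_filter] at hib'
          exact hib'.2 hx
        rw [huniq C' ⟨hC', this⟩]
      · -- multiset condition
        have hval : (π'.image rb).val = π'.val.map rb := by
          rw [Finset.image_val, Multiset.dedup_eq_self.2]
          exact Multiset.Nodup.map_on (fun x hx y hy => hrbinj hx hy) π'.nodup
        rw [hval, Multiset.map_map, ← hhalf]
        apply Multiset.map_congr rfl
        intro C hC
        simp only [Function.comp_apply]
        have h1 : (rb C).sum w = (F (rb C)).card / 2 :=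
          (hhalfF (rb C) (Finset.filter_subset _ _)).symm
        rw [h1, ← hCeq C hC]
      · -- image F recovers π'
        rw [Finset.image_image]
        have : π'.image (F ∘ rb) = π'.image id := by
          apply Finset.image_congr
          intro C hC
          exact (hCeq C hC).symm
        rw [this, Finset.image_id]
    · rintro ⟨π, ⟨hne, hsub, hcover, hsum⟩, rfl⟩
      have hFinj : Set.InjOn F ↑π := by
        intro b1 hb1 b2 hb2 he
        rw [← hrbF b1 (hsub b1 hb1), ← hrbF b2 (hsub b2 hb2), he]
      refine ⟨⟨?_, ?_, ?_⟩, ?_, ?_⟩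
      · -- nonempty blocks
        intro C hC
        obtain ⟨b, hb, rfl⟩ := Finset.mem_image.1 hC
        obtain ⟨i, hi⟩ := hne b hb
        obtain ⟨z, hz⟩ := hφne i (hsub b hb hi)
        exact ⟨z, Finset.mem_biUnion.2 ⟨i, hi, hz⟩⟩
      · -- subset ground
        intro C hC
        obtain ⟨b, hb, rfl⟩ := Finset.mem_image.1 hC
        intro z hz
        obtain ⟨i, hi, hzi⟩ := Finset.mem_biUnion.1 hz
        exact hφsub i (hsub b hb hi) hzi
      · -- cover
        intro x hxG
        have hgx : gorbF n f g x ∈ Gorbs n f g := Finset.mem_image_of_mem _ hxG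
        rw [← hφimg] at hgx
        obtain ⟨i, hi, hie⟩ := Finset.mem_image.1 hgx
        have hxi : x ∈ φ i := by rw [hie]; exact mem_gorbF_self hf hg hxG
        obtain ⟨b, ⟨hb, hib⟩, huniq⟩ := hcover i hi
        refine ⟨F b, ⟨Finset.mem_image_of_mem _ hb, Finset.mem_biUnion.2 ⟨i, hib, hxi⟩⟩, ?_⟩
        rintro C' ⟨hC', hxC'⟩
        obtain ⟨b', hb', rfl⟩ := Finset.mem_image.1 hC'
        obtain ⟨j, hjb', hxj⟩ := Finset.mem_biUnion.1 hxC'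
        have hj : j ∈ Finset.Icc 1 ℓ := hsub b' hb' hjb'
        have hij : i = j := by
          by_contra hne'
          have := hdisj i hi j hj hne'
          rw [Finset.disjoint_left] at this
          exact this hxi hxj
        subst hij
        rw [huniq b' ⟨hb', hjb'⟩]
      · -- stability
        intro C hC
        obtain ⟨b, hb, rfl⟩ := Finset.mem_image.1 hC
        constructor
        · intro y hy
          obtain ⟨i, hi, hyi⟩ := Finset.mem_biUnion.1 hy
          exact Finset.mem_biUnion.2 ⟨i, hi, hφstf i (hsub b hb hi) y hyi⟩
        · intro y hy
          obtain ⟨i, hi, hyi⟩ := Finset.mem_biUnion.1 hy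
          exact Finset.mem_biUnion.2 ⟨i, hi, hφstg i (hsub b hb hi) y hyi⟩
      · -- multiset condition
        have hval : (π.image F).val = π.val.map F := by
          rw [Finset.image_val, Multiset.dedup_eq_self.2]
          exact Multiset.Nodup.map_on (fun x hx y hy => hFinj hx hy) π.nodup
        rw [hval, Multiset.map_map, ← hsum]
        apply Multiset.map_congr rfl
        intro b hb
        simp only [Function.comp_apply]
        exact hhalfF b (hsub b hb)
  rw [hSetEq]
  apply Set.ncard_image_of_injOn
  intro π1 h1 π2 h2 he'
  have he : π1.image F = π2.image F := he'
  simp only [Set.mem_setOf_eq] at h1 h2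
  ext b
  constructor
  · intro hb
    have : F b ∈ π2.image F := by rw [← he]; exact Finset.mem_image_of_mem _ hb
    obtain ⟨b2, hb2, hbe⟩ := Finset.mem_image.1 this
    have : b2 = b := by
      rw [← hrbF b2 (h2.2.1 b2 hb2), hbe, hrbF b (h1.2.1 b hb)]
    rwa [← this]
  · intro hb
    have : F b ∈ π1.image F := by rw [he]; exact Finset.mem_image_of_mem _ hb
    obtain ⟨b1, hb1, hbe⟩ := Finset.mem_image.1 this
    have : b1 = b := by
      rw [← hrbF b1 (h1.2.1 b1 hb1), hbe, hrbF b (h2.2.1 b hb)]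
    rwa [← this]

end Count

section Assembly

theorem ncard_prod' {α β : Type} (s : Set α) (t : Set β) (hs : s.Finite) (ht : t.Finite) :
    (s ×ˢ t).ncard = s.ncard * t.ncard := by
  rw [Set.ncard_eq_toFinset_card _ (hs.prod ht), ← Set.Finite.toFinset_prod hs ht,
    Set.ncard_eq_toFinset_card _ hs, Set.ncard_eq_toFinset_card _ ht]
  exact Finset.card_product _ _

theorem dep_decomp {α β γ : Type} (S : Set α) (A : α → Set β) (B : α → Set γ) :
    {m : α × β × γ | m.1 ∈ S ∧ m.2.1 ∈ A m.1 ∧ m.2.2 ∈ B m.1}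
      = ⋃ a ∈ S, (fun bc : β × γ => (a, bc.1, bc.2)) '' (A a ×ˢ B a) := by
  ext ⟨x, y, z⟩
  simp only [Set.mem_setOf_eq, Set.mem_iUnion, Set.mem_image, Set.mem_prod, Prod.mk.injEq]
  constructor
  · rintro ⟨h1, h2, h3⟩
    exact ⟨x, h1, (y, z), ⟨h2, h3⟩, rfl, rfl, rfl⟩
  · rintro ⟨a, ha, ⟨b, c⟩, ⟨hb, hc⟩, rfl, rfl, rfl⟩
    exact ⟨ha, hb, hc⟩

theorem dep_finite {α β γ : Type} (S : Set α) (A : α → Set β) (B : α → Set γ)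
    (hS : S.Finite) (hAf : ∀ a ∈ S, (A a).Finite) (hBf : ∀ a ∈ S, (B a).Finite) :
    {m : α × β × γ | m.1 ∈ S ∧ m.2.1 ∈ A m.1 ∧ m.2.2 ∈ B m.1}.Finite := by
  rw [dep_decomp]
  exact hS.biUnion (fun a ha => (((hAf a ha).prod (hBf a ha)).image _))

theorem ncard_dep_prod {α β γ : Type} (S : Set α) (A : α → Set β) (B : α → Set γ)
    (hS : S.Finite) (hAf : ∀ a ∈ S, (A a).Finite) (hBf : ∀ a ∈ S, (B a).Finite)
    (p q : ℕ) (hA : ∀ a ∈ S, (A a).ncard = p) (hB : ∀ a ∈ S, (B a).ncard = q) :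
    {m : α × β × γ | m.1 ∈ S ∧ m.2.1 ∈ A m.1 ∧ m.2.2 ∈ B m.1}.ncard
      = S.ncard * (p * q) := by
  classical
  revert hAf hBf hA hB
  induction S, hS using Set.Finite.induction_on with
  | empty => intro _ _ _ _; simp
  | @insert a s ha hs ih =>
    intro hAf hBf hA hB
    have haS : (A a).Finite := hAf a (Set.mem_insert _ _)
    have hbS : (B a).Finite := hBf a (Set.mem_insert _ _)
    have hsub : ∀ x ∈ s, x ∈ insert a s := fun x hx => Set.mem_insert_of_mem _ hx
    have ihe := ih (fun x hx => hAf x (hsub x hx)) (fun x hx => hBf x (hsub x hx))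
      (fun x hx => hA x (hsub x hx)) (fun x hx => hB x (hsub x hx))
    have hsplit : {m : α × β × γ | m.1 ∈ insert a s ∧ m.2.1 ∈ A m.1 ∧ m.2.2 ∈ B m.1}
        = ((fun bc : β × γ => (a, bc.1, bc.2)) '' (A a ×ˢ B a))
          ∪ {m : α × β × γ | m.1 ∈ s ∧ m.2.1 ∈ A m.1 ∧ m.2.2 ∈ B m.1} := by
      ext ⟨x, y, z⟩
      simp only [Set.mem_setOf_eq, Set.mem_insert_iff, Set.mem_union, Set.mem_image,
        Set.mem_prod, Prod.mk.injEq]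
      constructor
      · rintro ⟨(rfl | hx), h2, h3⟩
        · exact Or.inl ⟨(y, z), ⟨h2, h3⟩, rfl, rfl, rfl⟩
        · exact Or.inr ⟨hx, h2, h3⟩
      · rintro (⟨⟨b, c⟩, ⟨hb, hc⟩, rfl, rfl, rfl⟩ | ⟨hx, h2, h3⟩)
        · exact ⟨Or.inl rfl, hb, hc⟩
        · exact ⟨Or.inr hx, h2, h3⟩
    have hdis : Disjoint ((fun bc : β × γ => (a, bc.1, bc.2)) '' (A a ×ˢ B a))
        {m : α × β × γ | m.1 ∈ s ∧ m.2.1 ∈ A m.1 ∧ m.2.2 ∈ B m.1} := by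
      rw [Set.disjoint_left]
      rintro ⟨x, y, z⟩ hm1 hm2
      obtain ⟨⟨b, c⟩, _, he⟩ := hm1
      simp only [Prod.mk.injEq] at he
      obtain ⟨rfl, -, -⟩ := he
      exact ha hm2.1
    have hfin1 : ((fun bc : β × γ => (a, bc.1, bc.2)) '' (A a ×ˢ B a)).Finite :=
      (haS.prod hbS).image _
    have hfin2 : {m : α × β × γ | m.1 ∈ s ∧ m.2.1 ∈ A m.1 ∧ m.2.2 ∈ B m.1}.Finite :=
      dep_finite s A B hs (fun x hx => hAf x (hsub x hx)) (fun x hx => hBf x (hsub x hx))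
    rw [hsplit, Set.ncard_union_eq hdis hfin1 hfin2]
    have himg : ((fun bc : β × γ => (a, bc.1, bc.2)) '' (A a ×ˢ B a)).ncard
        = p * q := by
      rw [Set.ncard_image_of_injective _ (fun bc bc' he => by
        simpa [Prod.ext_iff] using he), ncard_prod' _ _ haS hbS,
        hA a (Set.mem_insert _ _), hB a (Set.mem_insert _ _)]
    rw [himg, ihe, Set.ncard_insert_of_notMem ha hs]
    ring

theorem ncard_eq_sum_fibers {α ι : Type} [Fintype ι] [DecidableEq ι]
    (s : Set α) (hs : s.Finite) (c : α → ι) :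
    s.ncard = ∑ i : ι, (s ∩ c ⁻¹' {i}).ncard := by
  classical
  have h1 : s.ncard = hs.toFinset.card := Set.ncard_eq_toFinset_card _ hs
  rw [h1, Finset.card_eq_sum_card_fiberwise (f := c) (t := Finset.univ)
    (fun x _ => Finset.mem_univ _)]
  apply Finset.sum_congr rfl
  intro i _
  have h2 : (s ∩ c ⁻¹' {i}) = ↑(hs.toFinset.filter (fun a => c a = i)) := by
    ext x
    simp [Set.Finite.mem_toFinset]
  rw [h2, Set.ncard_coe_finset]

theorem pairings_finite (n : ℕ) : {f : ℕ → ℕ | IsPairing n f}.Finite := by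
  classical
  apply Set.Finite.of_finite_image (f := fun f => (groundSet n).image (fun x => (x, f x)))
  · apply Set.Finite.subset (((groundSet n ×ˢ groundSet n).powerset : Finset (Finset (ℕ × ℕ))) :
      Set (Finset (ℕ × ℕ))).toFinite
    rintro _ ⟨f, hf, rfl⟩
    simp only [Finset.coe_powerset, Set.mem_preimage, Set.mem_powerset_iff,
      Finset.mem_coe, Finset.coe_subset]
    intro p hp
    obtain ⟨x, hx, rfl⟩ := Finset.mem_image.1 hp
    exact Finset.mem_product.2 ⟨hx, (hf.1 x hx).1⟩
  · intro f hf f' hf' he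
    funext x
    by_cases hx : x ∈ groundSet n
    · have he2 : (groundSet n).image (fun y => (y, f y))
          = (groundSet n).image (fun y => (y, f' y)) := he
      have : (x, f x) ∈ (groundSet n).image (fun y => (y, f' y)) := by
        rw [← he2]; exact Finset.mem_image_of_mem _ hx
      obtain ⟨y, hy, hye⟩ := Finset.mem_image.1 this
      simp only [Prod.mk.injEq] at hye
      obtain ⟨rfl, h2⟩ := hye
      exact h2.symm
    · rw [hf.2 x hx, hf'.2 x hx]

theorem partitions_finite (n : ℕ) (P : Finset (Finset ℕ) → Prop) :
    {π : Finset (Finset ℕ) | (∀ B ∈ π, B ⊆ groundSet n) ∧ P π}.Finite := by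
  classical
  apply Set.Finite.subset ((((groundSet n).powerset.powerset : Finset (Finset (Finset ℕ)))) :
    Set (Finset (Finset ℕ))).toFinite
  intro π hπ
  simp only [Set.mem_setOf_eq] at hπ
  have : π ∈ (groundSet n).powerset.powerset := by
    rw [Finset.mem_powerset]
    intro B hB
    rw [Finset.mem_powerset]
    exact hπ.1 B hB
  exact Finset.mem_coe.2 this

end Assembly

end LPH

/-- **Proposition 1**: `LP^n_{ν,ρ} = Σ_{λ,μ ⊢ n} R̄_{λ,ν}·R̄_{μ,ρ}·L^n_{λ,μ}`. -/
theorem LPtype_eq_sum (n : ℕ) (hn : 1 ≤ n) (ν ρ : Nat.Partition n) :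
    LPtype n ν.parts ρ.parts =
      ∑ lam : Nat.Partition n, ∑ mu : Nat.Partition n,
        Rbar lam ν * Rbar mu ρ * Lcount n lam mu := by
  classical
  have hgood1 : LPH.GoodInvol n (f1 n) := LPH.good_f1 hn
  have hgood2 : LPH.GoodInvol n f2 := LPH.good_f2
  set T := { m : (ℕ → ℕ) × Finset (Finset ℕ) × Finset (Finset ℕ) |
    IsLOPH n m.1 m.2.1 m.2.2 ∧ halfType m.2.1 = ν.parts ∧ halfType m.2.2 = ρ.parts } with hT
  -- T is finite
  have hpow : ∀ π : Finset (Finset ℕ), (∀ B ∈ π, B ⊆ groundSet n) →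
      π ∈ ({π : Finset (Finset ℕ) | (∀ B ∈ π, B ⊆ groundSet n) ∧ True}) := by
    intro π h; exact ⟨h, trivial⟩
  have hTfin : T.Finite := by
    apply Set.Finite.subset (LPH.dep_finite {f : ℕ → ℕ | IsPairing n f}
      (fun _ => {π : Finset (Finset ℕ) | (∀ B ∈ π, B ⊆ groundSet n) ∧ True})
      (fun _ => {π : Finset (Finset ℕ) | (∀ B ∈ π, B ⊆ groundSet n) ∧ True})
      (LPH.pairings_finite n) (fun _ _ => LPH.partitions_finite n _)
      (fun _ _ => LPH.partitions_finite n _))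
    rintro ⟨f3, π1, π2⟩ ⟨⟨hp, h1, h2, _, _⟩, _, _⟩
    exact ⟨hp, ⟨h1.2.1, trivial⟩, ⟨h2.2.1, trivial⟩⟩
  -- the classifier
  set c : (ℕ → ℕ) × Finset (Finset ℕ) × Finset (Finset ℕ) → Nat.Partition n × Nat.Partition n :=
    fun m =>
      if h : IsPairing n m.1 then
        (LPH.lamPart n (f1 n) m.1 hgood1 (LPH.good_of_pairing h),
         LPH.lamPart n f2 m.1 hgood2 (LPH.good_of_pairing h))
      else default
    with hc
  have h0 : T.ncard = ∑ i : Nat.Partition n × Nat.Partition n, (T ∩ c ⁻¹' {i}).ncard :=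
    LPH.ncard_eq_sum_fibers T hTfin c
  have hfiber : ∀ lam mu : Nat.Partition n,
      (T ∩ c ⁻¹' {(lam, mu)}).ncard = Rbar lam ν * Rbar mu ρ * Lcount n lam mu := by
    intro lam mu
    set S := {f3 : ℕ → ℕ | IsPairing n f3 ∧ LPH.lamMS n (f1 n) f3 = lam.parts ∧
      LPH.lamMS n f2 f3 = mu.parts} with hS
    set A : (ℕ → ℕ) → Set (Finset (Finset ℕ)) := fun f3 =>
      {π | IsSetPartition n π ∧ (∀ B ∈ π, StableUnder (f1 n) B ∧ StableUnder f3 B) ∧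
        π.val.map (fun B => B.card / 2) = ν.parts} with hA
    set B : (ℕ → ℕ) → Set (Finset (Finset ℕ)) := fun f3 =>
      {π | IsSetPartition n π ∧ (∀ B ∈ π, StableUnder f2 B ∧ StableUnder f3 B) ∧
        π.val.map (fun B => B.card / 2) = ρ.parts} with hB
    have hE : T ∩ c ⁻¹' {(lam, mu)}
        = {m : (ℕ → ℕ) × Finset (Finset ℕ) × Finset (Finset ℕ) |
            m.1 ∈ S ∧ m.2.1 ∈ A m.1 ∧ m.2.2 ∈ B m.1} := by
      ext ⟨f3, π1, π2⟩
      simp only [hT, Set.mem_inter_iff, Set.mem_setOf_eq, Set.mem_preimage,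
        Set.mem_singleton_iff, hS, hA, hB]
      constructor
      · rintro ⟨⟨⟨hp, h1, h2, hst1, hst2⟩, ht1, ht2⟩, hcm⟩
        rw [hc] at hcm
        simp only [dif_pos hp] at hcm
        have hcm1 := congrArg Prod.fst hcm
        have hcm2 := congrArg Prod.snd hcm
        simp only at hcm1 hcm2
        have e1 : LPH.lamMS n (f1 n) f3 = lam.parts := by
          rw [← hcm1]; rfl
        have e2 : LPH.lamMS n f2 f3 = mu.parts := by
          rw [← hcm2]; rfl
        exact ⟨⟨hp, e1, e2⟩, ⟨h1, hst1, ht1⟩, ⟨h2, hst2, ht2⟩⟩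
      · rintro ⟨⟨hp, e1, e2⟩, ⟨h1, hst1, ht1⟩, ⟨h2, hst2, ht2⟩⟩
        refine ⟨⟨⟨hp, h1, h2, hst1, hst2⟩, ht1, ht2⟩, ?_⟩
        rw [hc]
        simp only [dif_pos hp]
        have : LPH.lamPart n (f1 n) f3 hgood1 (LPH.good_of_pairing hp) = lam := by
          apply Nat.Partition.ext
          exact e1
        have h2' : LPH.lamPart n f2 f3 hgood2 (LPH.good_of_pairing hp) = mu := by
          apply Nat.Partition.ext
          exact e2
        rw [this, h2']
    rw [hE]
    have hSfin : S.Finite := (LPH.pairings_finite n).subset (fun f3 hf3 => hf3.1)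
    have hAfin : ∀ f3 ∈ S, (A f3).Finite := by
      intro f3 _
      apply (LPH.partitions_finite n (fun _ => True)).subset
      rintro π ⟨h1, _, _⟩
      exact ⟨h1.2.1, trivial⟩
    have hBfin : ∀ f3 ∈ S, (B f3).Finite := by
      intro f3 _
      apply (LPH.partitions_finite n (fun _ => True)).subset
      rintro π ⟨h1, _, _⟩
      exact ⟨h1.2.1, trivial⟩
    have hAcard : ∀ f3 ∈ S, (A f3).ncard = Rbar lam ν := by
      rintro f3 ⟨hp, e1, e2⟩
      have hL : ((lam.parts.toList : List ℕ) : Multiset ℕ) = LPH.lamMS n (f1 n) f3 := by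
        rw [Multiset.coe_toList, e1]
      have := LPH.card_stable_partitions hgood1 (LPH.good_of_pairing hp)
        lam.parts.toList hL ν.parts
      rw [hA]
      simp only
      rw [this, Rbar]
      have hlen : lam.parts.toList.length = lam.parts.card := Multiset.length_toList _
      rw [hlen]
    have hBcard : ∀ f3 ∈ S, (B f3).ncard = Rbar mu ρ := by
      rintro f3 ⟨hp, e1, e2⟩
      have hL : ((mu.parts.toList : List ℕ) : Multiset ℕ) = LPH.lamMS n f2 f3 := by
        rw [Multiset.coe_toList, e2]
      have := LPH.card_stable_partitions hgood2 (LPH.good_of_pairing hp)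
        mu.parts.toList hL ρ.parts
      rw [hB]
      simp only
      rw [this, Rbar]
      have hlen : mu.parts.toList.length = mu.parts.card := Multiset.length_toList _
      rw [hlen]
    have hLc : S.ncard = Lcount n lam mu := by
      rw [Lcount]
      congr 1
      ext f3
      simp only [hS, Set.mem_setOf_eq]
      constructor
      · rintro ⟨hp, e1, e2⟩
        refine ⟨hp, ?_, ?_⟩
        · exact (LPH.HCT_doubled_iff hgood1 (LPH.good_of_pairing hp) lam.parts).2 e1.symm
        · exact (LPH.HCT_doubled_iff hgood2 (LPH.good_of_pairing hp) mu.parts).2 e2.symm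
      · rintro ⟨hp, hh1, hh2⟩
        refine ⟨hp, ?_, ?_⟩
        · exact ((LPH.HCT_doubled_iff hgood1 (LPH.good_of_pairing hp) lam.parts).1 hh1).symm
        · exact ((LPH.HCT_doubled_iff hgood2 (LPH.good_of_pairing hp) mu.parts).1 hh2).symm
    rw [LPH.ncard_dep_prod S A B hSfin hAfin hBfin (Rbar lam ν) (Rbar mu ρ) hAcard hBcard,
      hLc]
    ring
  rw [LPtype]
  rw [show { m : (ℕ → ℕ) × Finset (Finset ℕ) × Finset (Finset ℕ) |
    IsLOPH n m.1 m.2.1 m.2.2 ∧ halfType m.2.1 = ν.parts ∧ halfType m.2.2 = ρ.parts } = T from rfl]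
  rw [h0, Fintype.sum_prod_type]
  apply Finset.sum_congr rfl
  intro lam _
  apply Finset.sum_congr rfl
  intro mu _
  exact hfiber lam mu
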